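/- arXiv:2509.10084 — 2 statements merged into one kernel-verified Lean document; each statement's English description precedes it below -/
import Mathlib

section
/- For a smooth positive function n : ℝ³ → ℝ, the quantum Bohm potential term satisfies the identity (ε²/2) · n · ∇(Δ√n / √n) = (ε²/4) · div(n · (∇ ⊗ ∇) log n), i.e., for each component j, (ε²/2) · n · ∂ⱼ(Δ√n / √n) = (ε²/4) · Σᵢ ∂ᵢ(n · ∂ᵢ∂ⱼ log n). -/
open Real

/-- Directional (partial) derivative along the `i`-th coordinate direction. -/
noncomputable def pd (i : Fin 3) (f : (Fin 3 → ℝ) → ℝ) : (Fin 3 → ℝ) → ℝ :=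
  fun x => fderiv ℝ f x (Pi.single i 1)

section toolkit
variable {f g u : (Fin 3 → ℝ) → ℝ} {x : Fin 3 → ℝ} {i j : Fin 3}

lemma contDiff_pd {m : ℕ} (i : Fin 3) (hf : ContDiff ℝ (m+1) f) :
    ContDiff ℝ m (pd i f) := by
  have h : pd i f = fun x =>
      (ContinuousLinearMap.apply ℝ ℝ (Pi.single i 1 : Fin 3 → ℝ)) (fderiv ℝ f x) := rfl
  rw [h]
  exact (ContinuousLinearMap.apply ℝ ℝ _).contDiff.comp
    (hf.fderiv_right (m := m) (by norm_cast))

lemma pd_add (hf : DifferentiableAt ℝ f x) (hg : DifferentiableAt ℝ g x) :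
    pd i (fun y => f y + g y) x = pd i f x + pd i g x := by
  simp [pd, fderiv_fun_add hf hg]

lemma pd_sub (hf : DifferentiableAt ℝ f x) (hg : DifferentiableAt ℝ g x) :
    pd i (fun y => f y - g y) x = pd i f x - pd i g x := by
  simp [pd, fderiv_fun_sub hf hg]

lemma pd_mul (hf : DifferentiableAt ℝ f x) (hg : DifferentiableAt ℝ g x) :
    pd i (fun y => f y * g y) x = f x * pd i g x + g x * pd i f x := by
  simp [pd, fderiv_fun_mul hf hg]

lemma pd_const_mul (hf : DifferentiableAt ℝ f x) (c : ℝ) :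
    pd i (fun y => c * f y) x = c * pd i f x := by
  simp [pd, fderiv_const_mul hf c]

lemma pd_sum {s : Finset (Fin 3)} {A : Fin 3 → (Fin 3 → ℝ) → ℝ}
    (h : ∀ k ∈ s, DifferentiableAt ℝ (A k) x) :
    pd i (fun y => ∑ k ∈ s, A k y) x = ∑ k ∈ s, pd i (A k) x := by
  simp [pd, fderiv_fun_sum h]

lemma pd_comp {h : ℝ → ℝ} {h' : ℝ} (hh : HasDerivAt h h' (u x))
    (hu : DifferentiableAt ℝ u x) :
    pd i (fun y => h (u y)) x = h' * pd i u x := by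
  have H := hh.comp_hasFDerivAt x hu.hasFDerivAt
  simp only [pd]
  rw [show (fun y => h (u y)) = h ∘ u from rfl, H.fderiv]
  simp

lemma diffAt_inv_comp (hg : DifferentiableAt ℝ g x) (hgx : g x ≠ 0) :
    DifferentiableAt ℝ (fun y => (g y)⁻¹) x :=
  ((hasDerivAt_inv hgx).comp_hasFDerivAt x hg.hasFDerivAt).differentiableAt

lemma diffAt_div (hf : DifferentiableAt ℝ f x) (hg : DifferentiableAt ℝ g x)
    (hgx : g x ≠ 0) : DifferentiableAt ℝ (fun y => f y / g y) x := by
  simp only [div_eq_mul_inv]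
  exact hf.mul (diffAt_inv_comp hg hgx)

lemma pd_div (hf : DifferentiableAt ℝ f x) (hg : DifferentiableAt ℝ g x)
    (hgx : g x ≠ 0) :
    pd i (fun y => f y / g y) x = (pd i f x * g x - f x * pd i g x) / (g x) ^ 2 := by
  have h1 : pd i (fun y => (g y)⁻¹) x = -((g x)^2)⁻¹ * pd i g x :=
    pd_comp (hasDerivAt_inv hgx) hg
  have h2 : pd i (fun y => f y * (g y)⁻¹) x
      = f x * pd i (fun y => (g y)⁻¹) x + (g x)⁻¹ * pd i f x :=
    pd_mul hf (diffAt_inv_comp hg hgx)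
  simp only [div_eq_mul_inv]
  rw [h2, h1]
  field_simp
  ring

lemma pd_comm (hf : ContDiff ℝ 2 f) (i j : Fin 3) (x : Fin 3 → ℝ) :
    pd i (pd j f) x = pd j (pd i f) x := by
  have hf1 : ∀ y, HasFDerivAt f (fderiv ℝ f y) y := fun y =>
    (hf.differentiable (by norm_num) y).hasFDerivAt
  have hf2 : HasFDerivAt (fderiv ℝ f) (fderiv ℝ (fderiv ℝ f) x) x := by
    have : Differentiable ℝ (fderiv ℝ f) :=
      (hf.fderiv_right (m := 1) (by norm_num)).differentiable (by norm_num)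
    exact (this x).hasFDerivAt
  have key := second_derivative_symmetric hf1 hf2 (Pi.single i 1) (Pi.single j 1)
  have e : ∀ (k l : Fin 3), pd k (pd l f) x
      = (fderiv ℝ (fderiv ℝ f) x (Pi.single k 1)) (Pi.single l 1) := by
    intro k l
    have h0 : pd l f = fun y =>
        (ContinuousLinearMap.apply ℝ ℝ (Pi.single l 1 : Fin 3 → ℝ)) (fderiv ℝ f y) := rfl
    rw [pd, h0]
    have H := ((ContinuousLinearMap.apply ℝ ℝ (Pi.single l 1 : Fin 3 → ℝ)).hasFDerivAt.comp x hf2)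
    rw [show (fun y => ((ContinuousLinearMap.apply ℝ ℝ) (Pi.single l 1 : Fin 3 → ℝ)) (fderiv ℝ f y)) = (⇑((ContinuousLinearMap.apply ℝ ℝ) (Pi.single l 1 : Fin 3 → ℝ)) ∘ fderiv ℝ f) from rfl, H.fderiv]
    simp
  rw [e i j, e j i, key]

end toolkit

/-- Bohm potential identity:
`(ε²/2)·n·∂ⱼ(Δ√n/√n) = (ε²/4)·∑ᵢ ∂ᵢ(n·∂ᵢ∂ⱼ log n)`. -/
theorem bohm_potential_identity (ε : ℝ) (hε : 0 < ε)
    (n : (Fin 3 → ℝ) → ℝ) (hn : ContDiff ℝ 3 n) (hpos : ∀ x, 0 < n x) :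
    ∀ (x : Fin 3 → ℝ) (j : Fin 3),
      (ε ^ 2 / 2) * n x *
        pd j (fun y => (∑ i, pd i (pd i (fun z => Real.sqrt (n z))) y)
            / Real.sqrt (n y)) x
      = (ε ^ 2 / 4) *
          ∑ i, pd i (fun y => n y * pd i (pd j (fun z => Real.log (n z))) y) x := by
  intro x j
  -- basic facts
  have hne : ∀ y, n y ≠ 0 := fun y => (hpos y).ne'
  have hsq : ∀ y, (0:ℝ) < Real.sqrt (n y) := fun y => Real.sqrt_pos.mpr (hpos y)
  have hsqne : ∀ y, Real.sqrt (n y) ≠ 0 := fun y => (hsq y).ne'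
  have hsq2 : ∀ y, Real.sqrt (n y) * Real.sqrt (n y) = n y := fun y =>
    Real.mul_self_sqrt (hpos y).le
  have hdn : Differentiable ℝ n := hn.differentiable (by norm_num)
  have hCg : ∀ i, ContDiff ℝ 2 (pd i n) := fun i =>
    contDiff_pd (m := 2) i (by exact_mod_cast hn)
  have hdg : ∀ i, Differentiable ℝ (pd i n) := fun i =>
    (hCg i).differentiable (by norm_num)
  have hCgg : ∀ i k, ContDiff ℝ 1 (pd k (pd i n)) := fun i k =>
    contDiff_pd (m := 1) k (by exact_mod_cast hCg i)
  have hdgg : ∀ i k, Differentiable ℝ (pd k (pd i n)) := fun i k =>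
    (hCgg i k).differentiable (by norm_num)
  have hdsq : Differentiable ℝ (fun z => Real.sqrt (n z)) := fun y =>
    ((Real.hasDerivAt_sqrt (hne y)).comp_hasFDerivAt y (hdn y).hasFDerivAt).differentiableAt
  -- first derivatives of sqrt and log comps
  have hE1 : ∀ i : Fin 3, pd i (fun z => Real.sqrt (n z))
      = fun y => pd i n y / (2 * Real.sqrt (n y)) := by
    intro i; funext y
    rw [pd_comp (Real.hasDerivAt_sqrt (hne y)) (hdn y)]
    rw [div_eq_mul_inv, div_eq_mul_inv]; ring
  have hE2 : pd j (fun z => Real.log (n z)) = fun y => pd j n y / n y := by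
    funext y
    rw [pd_comp (Real.hasDerivAt_log (hne y)) (hdn y)]
    rw [div_eq_mul_inv]; ring
  have hd2sq : Differentiable ℝ (fun y => 2 * Real.sqrt (n y)) := by
    exact Differentiable.const_mul hdsq 2
  have h2sqne : ∀ y, 2 * Real.sqrt (n y) ≠ 0 := fun y => by have := hsq y; positivity
  -- second derivative of sqrt comp
  have hE3 : ∀ (i : Fin 3) (y), pd i (pd i (fun z => Real.sqrt (n z))) y
      = pd i (pd i n) y / (2 * Real.sqrt (n y))
        - (pd i n y * pd i n y) / (4 * (n y * Real.sqrt (n y))) := by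
    intro i y
    rw [hE1 i]
    rw [pd_div (hdg i y) (hd2sq y) (h2sqne y)]
    rw [pd_const_mul (hdsq y) 2, hE1 i]
    set s := Real.sqrt (n y) with hs
    have hsne : s ≠ 0 := hsqne y
    rw [← hsq2 y]
    have hsqy : Real.sqrt (n y) ≠ 0 := hsqne y
    field_simp
    ring
  -- A = B : closed form of (Δ√n)/√n
  have hA : (fun y => (∑ i, pd i (pd i (fun z => Real.sqrt (n z))) y) / Real.sqrt (n y))
      = fun y => (∑ i, pd i (pd i n) y) / (2 * n y)
          - (∑ i, pd i n y * pd i n y) / (4 * (n y * n y)) := by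
    funext y
    rw [show (∑ i, pd i (pd i (fun z => Real.sqrt (n z))) y)
        = ∑ i, (pd i (pd i n) y / (2 * Real.sqrt (n y))
            - (pd i n y * pd i n y) / (4 * (n y * Real.sqrt (n y))))
      from Finset.sum_congr rfl (fun i _ => hE3 i y)]
    rw [Finset.sum_sub_distrib, ← Finset.sum_div, ← Finset.sum_div]
    set s := Real.sqrt (n y) with hs
    have hsne : s ≠ 0 := hsqne y
    rw [← hsq2 y]
    have hsqy : Real.sqrt (n y) ≠ 0 := hsqne y
    field_simp
    ring
  -- closed form of n * ∂i∂j log n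
  have hR : ∀ i : Fin 3, (fun y => n y * pd i (pd j (fun z => Real.log (n z))) y)
      = fun y => pd i (pd j n) y - pd i n y * pd j n y / n y := by
    intro i; funext y
    rw [hE2]
    rw [pd_div (hdg j y) (hdn y) (hne y)]
    have hnne := hne y
    field_simp
  -- symmetry of derivatives
  have hsymm : ∀ i : Fin 3, pd i (pd j n) = pd j (pd i n) := fun i =>
    funext (pd_comm (hn.of_le (by norm_num)) i j)
  have h3 : ∀ i : Fin 3, pd i (pd j (pd i n)) x = pd j (pd i (pd i n)) x := fun i =>
    pd_comm (hCg i) i j x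
  -- RHS summands
  have hdiv2 : ∀ (i : Fin 3) (y), DifferentiableAt ℝ (fun y => pd i n y * pd j n y / n y) y :=
    fun i y => diffAt_div (((hdg i).mul (hdg j)) y) (hdn y) (hne y)
  have hRHS : ∀ i : Fin 3,
      pd i (fun y => n y * pd i (pd j (fun z => Real.log (n z))) y) x
      = pd j (pd i (pd i n)) x
        - ((pd i n x * pd j (pd i n) x + pd j n x * pd i (pd i n) x) * n x
            - pd i n x * pd j n x * pd i n x) / (n x) ^ 2 := by
    intro i
    rw [hR i]
    rw [pd_sub (hdgg j i x) (hdiv2 i x)]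
    rw [pd_div ((hdg i x).fun_mul (hdg j x)) (hdn x) (hne x)]
    rw [pd_mul (hdg i x) (hdg j x)]
    rw [hsymm i, h3 i]
  rw [hA, show (∑ i, pd i (fun y => n y * pd i (pd j (fun z => Real.log (n z))) y) x)
      = ∑ i, (pd j (pd i (pd i n)) x
        - ((pd i n x * pd j (pd i n) x + pd j n x * pd i (pd i n) x) * n x
            - pd i n x * pd j n x * pd i n x) / (n x) ^ 2)
    from Finset.sum_congr rfl (fun i _ => hRHS i)]
  -- LHS derivative
  have hdS : ∀ y, DifferentiableAt ℝ (fun y => ∑ i, pd i (pd i n) y) y := fun y =>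
    DifferentiableAt.fun_sum (fun i _ => hdgg i i y)
  have hdQ : ∀ y, DifferentiableAt ℝ (fun y => ∑ i, pd i n y * pd i n y) y := fun y =>
    DifferentiableAt.fun_sum (fun i _ => (hdg i y).fun_mul (hdg i y))
  have hd2n : DifferentiableAt ℝ (fun y => 2 * n y) x := (hdn.const_mul 2) x
  have hd4nn : DifferentiableAt ℝ (fun y => 4 * (n y * n y)) x :=
    ((hdn.mul hdn).const_mul 4) x
  have h2nne : (2 : ℝ) * n x ≠ 0 := by have := hpos x; positivity
  have h4nnne : (4 : ℝ) * (n x * n x) ≠ 0 := by have := hpos x; positivity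
  rw [pd_sub (diffAt_div (hdS x) hd2n h2nne) (diffAt_div (hdQ x) hd4nn h4nnne)]
  rw [pd_div (hdS x) hd2n h2nne, pd_div (hdQ x) hd4nn h4nnne]
  rw [pd_sum (fun i _ => hdgg i i x)]
  rw [pd_sum (fun i _ => (hdg i x).fun_mul (hdg i x))]
  rw [show (∑ i, pd j (fun y => pd i n y * pd i n y) x)
      = ∑ i, (pd i n x * pd j (pd i n) x + pd i n x * pd j (pd i n) x)
    from Finset.sum_congr rfl (fun i _ => pd_mul (hdg i x) (hdg i x))]
  rw [pd_const_mul (hdn x) 2, pd_const_mul ((hdn x).fun_mul (hdn x)) 4, pd_mul (hdn x) (hdn x)]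
  -- final algebra
  simp only [Fin.sum_univ_three]
  have hNx := hne x
  field_simp
  ring
end

section
/- The imaginary part of the Madelung-transformed Klein-Gordon equation yields the modified continuity equation: if φ = √n·exp(iS/ε) solves iε∂ₜφ + (ε²/2)Δφ − Vφ = (ε²υ²/2)∂ₜₜφ with n > 0 smooth, then ∂ₜn + div(n∇S) = υ²∂ₜ(n·∂ₜS). -/
open Complex

/-- Directional derivative of a function on space-time `ℝ³ × ℝ`. -/
noncomputable def dirDeriv {E : Type*} [NormedAddCommGroup E] [NormedSpace ℝ E]
    (v : (Fin 3 → ℝ) × ℝ) (f : ((Fin 3 → ℝ) × ℝ) → E) : ((Fin 3 → ℝ) × ℝ) → E :=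
  fun p => fderiv ℝ f p v

section aux
variable {v p : (Fin 3 → ℝ) × ℝ}

lemma dirDeriv_add {F : Type*} [NormedAddCommGroup F] [NormedSpace ℝ F]
    {f g : ((Fin 3 → ℝ) × ℝ) → F}
    (hf : DifferentiableAt ℝ f p) (hg : DifferentiableAt ℝ g p) :
    dirDeriv v (fun q => f q + g q) p = dirDeriv v f p + dirDeriv v g p := by
  simp [dirDeriv, fderiv_fun_add hf hg]

lemma dirDeriv_mul {𝔸 : Type*} [NormedCommRing 𝔸] [NormedAlgebra ℝ 𝔸]
    {f g : ((Fin 3 → ℝ) × ℝ) → 𝔸}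
    (hf : DifferentiableAt ℝ f p) (hg : DifferentiableAt ℝ g p) :
    dirDeriv v (fun q => f q * g q) p = dirDeriv v f p * g p + f p * dirDeriv v g p := by
  simp only [dirDeriv, fderiv_fun_mul hf hg]
  simp [smul_eq_mul]; ring

lemma dirDeriv_const_mul {c : ℂ} {f : ((Fin 3 → ℝ) × ℝ) → ℂ}
    (hf : DifferentiableAt ℝ f p) :
    dirDeriv v (fun q => c * f q) p = c * dirDeriv v f p := by
  simp only [dirDeriv, (hf.hasFDerivAt.const_mul c).fderiv]
  simp [smul_eq_mul]

lemma dirDeriv_ofReal {f : ((Fin 3 → ℝ) × ℝ) → ℝ}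
    (hf : DifferentiableAt ℝ f p) :
    dirDeriv v (fun q => (f q : ℂ)) p = Complex.ofReal (dirDeriv v f p) := by
  have h := Complex.ofRealCLM.hasFDerivAt.comp p hf.hasFDerivAt
  simp only [Function.comp_def, Complex.ofRealCLM_apply] at h
  simp only [dirDeriv, h.fderiv]
  rfl

lemma dirDeriv_cexp_ofReal {c : ℂ} {f : ((Fin 3 → ℝ) × ℝ) → ℝ}
    (hf : DifferentiableAt ℝ f p) :
    dirDeriv v (fun q => Complex.exp (c * (f q : ℂ))) p
      = c * Complex.ofReal (dirDeriv v f p) * Complex.exp (c * (f p : ℂ)) := by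
  have h1 : HasFDerivAt (fun q => (f q : ℂ)) (Complex.ofRealCLM.comp (fderiv ℝ f p)) p := by
    have h := Complex.ofRealCLM.hasFDerivAt.comp p hf.hasFDerivAt
    simpa [Function.comp_def, Complex.ofRealCLM_apply] using h
  have h2 := ((h1.const_mul c).cexp)
  simp only [dirDeriv, h2.fderiv]
  simp [smul_eq_mul]; ring

lemma dirDeriv_sq {f : ((Fin 3 → ℝ) × ℝ) → ℝ}
    (hf : DifferentiableAt ℝ f p) :
    dirDeriv v (fun q => f q ^ 2) p = 2 * f p * dirDeriv v f p := by
  have := dirDeriv_mul (v := v) hf hf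
  simp only [pow_two]
  rw [this]; ring

end aux

/-- Spatial direction `eᵢ`. -/
noncomputable def eS (i : Fin 3) : (Fin 3 → ℝ) × ℝ := (Pi.single i 1, 0)

/-- Time direction. -/
noncomputable def eT : (Fin 3 → ℝ) × ℝ := (0, 1)

set_option maxHeartbeats 2000000 in
/-- The imaginary part of the Madelung-transformed Klein–Gordon equation yields the
modified continuity equation `∂ₜn + div(n∇S) = υ²∂ₜ(n ∂ₜS)`. -/
theorem continuity_from_klein_gordon (ε υ : ℝ) (hε : 0 < ε) (hυ : 0 < υ)
    (n S : ((Fin 3 → ℝ) × ℝ) → ℝ) (V : ((Fin 3 → ℝ) × ℝ) → ℝ)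
    (hn : ContDiff ℝ 2 n) (hS : ContDiff ℝ 2 S) (hV : Continuous V)
    (hpos : ∀ p, 0 < n p)
    (φ : ((Fin 3 → ℝ) × ℝ) → ℂ)
    (hrep : ∀ p, φ p = (Real.sqrt (n p) : ℂ) * Complex.exp (Complex.I * (S p) / ε))
    (hKG : ∀ p,
      Complex.I * ε * dirDeriv eT φ p
        + (ε ^ 2 / 2 : ℝ) * (∑ i, dirDeriv (eS i) (dirDeriv (eS i) φ) p)
        - (V p : ℂ) * φ p
        = ((ε ^ 2 * υ ^ 2 / 2 : ℝ) : ℂ) * dirDeriv eT (dirDeriv eT φ) p) :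
    ∀ p,
      dirDeriv eT n p
        + (∑ i, dirDeriv (eS i) (fun q => n q * dirDeriv (eS i) S q) p)
        = υ ^ 2 * dirDeriv eT (fun q => n q * dirDeriv eT S q) p := by
  have hεC : (ε : ℂ) ≠ 0 := by exact_mod_cast hε.ne'
  set a : ((Fin 3 → ℝ) × ℝ) → ℝ := fun q => Real.sqrt (n q) with ha_def
  have haC : ∀ q, ContDiffAt ℝ 2 a q := fun q =>
    (Real.contDiffAt_sqrt (hpos q).ne').comp q hn.contDiffAt
  have haD : ∀ q, DifferentiableAt ℝ a q := fun q =>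
    (haC q).differentiableAt (by norm_num)
  have hSD : ∀ q, DifferentiableAt ℝ S q := fun q =>
    hS.contDiffAt.differentiableAt (by norm_num)
  have hnD : ∀ q, DifferentiableAt ℝ n q := fun q =>
    hn.contDiffAt.differentiableAt (by norm_num)
  have hD1 : ∀ (f : ((Fin 3 → ℝ) × ℝ) → ℝ), (∀ q, ContDiffAt ℝ 2 f q) →
      ∀ v q, DifferentiableAt ℝ (dirDeriv v f) q := by
    intro f hf v q
    have h1 : ContDiffAt ℝ 1 (fun r => fderiv ℝ f r v) q :=
      ((hf q).fderiv_right (by norm_num)).clm_apply contDiffAt_const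
    exact h1.differentiableAt one_ne_zero
  have haD1 : ∀ v q, DifferentiableAt ℝ (dirDeriv v a) q := hD1 a haC
  have hSD1 : ∀ v q, DifferentiableAt ℝ (dirDeriv v S) q :=
    hD1 S (fun q => hS.contDiffAt)
  -- the exponential factor
  set E : ((Fin 3 → ℝ) × ℝ) → ℂ := fun q => Complex.exp ((I / ε) * (S q : ℂ)) with hE_def
  have hφeq : φ = fun q => Complex.ofReal (a q) * E q := by
    funext q
    rw [hrep q, hE_def]
    norm_num
    simp only [ha_def]
    ring
  have hEDc : ∀ q, DifferentiableAt ℝ (fun r => ((S r : ℝ) : ℂ)) q := fun q =>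
    Complex.ofRealCLM.differentiableAt.comp q (hSD q)
  have hED : ∀ q, DifferentiableAt ℝ E q := fun q =>
    (((hEDc q).const_mul (I / ε)).cexp)
  have hdE : ∀ v q, dirDeriv v E q = (I / ε) * (dirDeriv v S q : ℝ) * E q := by
    intro v q
    exact dirDeriv_cexp_ofReal (hSD q)
  -- first derivative of φ
  have hdφ : ∀ v q, dirDeriv v φ q
      = (Complex.ofReal (dirDeriv v a q)
          + (I / ε) * Complex.ofReal (a q * dirDeriv v S q)) * E q := by
    intro v q
    rw [hφeq]
    have haDc : DifferentiableAt ℝ (fun r => Complex.ofReal (a r)) q :=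
      Complex.ofRealCLM.differentiableAt.comp q (haD q)
    rw [dirDeriv_mul haDc (hED q)]
    rw [dirDeriv_ofReal (haD q), hdE]
    push_cast
    ring
  -- second derivative of φ
  have hd2φ : ∀ v q, dirDeriv v (dirDeriv v φ) q =
      (Complex.ofReal (dirDeriv v (dirDeriv v a) q)
        + (I / ε) * Complex.ofReal (dirDeriv v a q * dirDeriv v S q
            + a q * dirDeriv v (dirDeriv v S) q)
        + (Complex.ofReal (dirDeriv v a q)
            + (I / ε) * Complex.ofReal (a q * dirDeriv v S q))
          * ((I / ε) * Complex.ofReal (dirDeriv v S q))) * E q := by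
    intro v q
    have hfun : dirDeriv v φ = fun r =>
        (Complex.ofReal (dirDeriv v a r)
          + (I / ε) * Complex.ofReal (a r * dirDeriv v S r)) * E r := funext (hdφ v)
    rw [hfun]
    have hc1 : DifferentiableAt ℝ (fun r => Complex.ofReal (dirDeriv v a r)) q :=
      Complex.ofRealCLM.differentiableAt.comp q (haD1 v q)
    have hprod : DifferentiableAt ℝ (fun r => a r * dirDeriv v S r) q :=
      (haD q).mul (hSD1 v q)
    have hc2 : DifferentiableAt ℝ (fun r => Complex.ofReal (a r * dirDeriv v S r)) q :=
      Complex.ofRealCLM.differentiableAt.comp q hprod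
    have hc : DifferentiableAt ℝ (fun r => Complex.ofReal (dirDeriv v a r)
        + (I / ε) * Complex.ofReal (a r * dirDeriv v S r)) q :=
      hc1.add (hc2.const_mul _)
    rw [dirDeriv_mul hc (hED q)]
    rw [dirDeriv_add hc1 (hc2.const_mul _), dirDeriv_const_mul hc2,
      dirDeriv_ofReal (haD1 v q), dirDeriv_ofReal hprod,
      dirDeriv_mul (haD q) (hSD1 v q), hdE]
    push_cast
    ring
  -- pointwise conclusion
  intro p
  have hEne : E p ≠ 0 := Complex.exp_ne_zero _
  have h0 := hKG p
  simp only [hdφ, hd2φ, Fin.sum_univ_three] at h0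
  simp only [hφeq] at h0
  have key :
      Complex.ofReal (2 * (ε * ε⁻¹) * (-(a p) * dirDeriv eT S p)
          + ε ^ 2 * (dirDeriv (eS 0) (dirDeriv (eS 0) a) p
              + dirDeriv (eS 1) (dirDeriv (eS 1) a) p
              + dirDeriv (eS 2) (dirDeriv (eS 2) a) p)
          - ε ^ 2 * ε⁻¹ * ε⁻¹ * a p * ((dirDeriv (eS 0) S p) ^ 2
              + (dirDeriv (eS 1) S p) ^ 2 + (dirDeriv (eS 2) S p) ^ 2)
          - 2 * V p * a p)
        + Complex.ofReal (2 * ε * dirDeriv eT a p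
          + ε ^ 2 * ε⁻¹ * (2 * dirDeriv (eS 0) a p * dirDeriv (eS 0) S p
              + a p * dirDeriv (eS 0) (dirDeriv (eS 0) S) p
              + 2 * dirDeriv (eS 1) a p * dirDeriv (eS 1) S p
              + a p * dirDeriv (eS 1) (dirDeriv (eS 1) S) p
              + 2 * dirDeriv (eS 2) a p * dirDeriv (eS 2) S p
              + a p * dirDeriv (eS 2) (dirDeriv (eS 2) S) p)) * I
      = Complex.ofReal (ε ^ 2 * υ ^ 2 * dirDeriv eT (dirDeriv eT a) p
            - ε ^ 2 * ε⁻¹ * ε⁻¹ * υ ^ 2 * a p * (dirDeriv eT S p) ^ 2)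
        + Complex.ofReal (ε ^ 2 * ε⁻¹ * (υ ^ 2 * (2 * dirDeriv eT a p * dirDeriv eT S p
            + a p * dirDeriv eT (dirDeriv eT S) p))) * I := by
    apply mul_right_cancel₀ hEne
    linear_combination (norm := (push_cast; ring_nf; simp only [Complex.I_sq]; ring_nf)) 2 * h0
  have him : 2 * ε * dirDeriv eT a p
          + ε ^ 2 * ε⁻¹ * (2 * dirDeriv (eS 0) a p * dirDeriv (eS 0) S p
              + a p * dirDeriv (eS 0) (dirDeriv (eS 0) S) p
              + 2 * dirDeriv (eS 1) a p * dirDeriv (eS 1) S p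
              + a p * dirDeriv (eS 1) (dirDeriv (eS 1) S) p
              + 2 * dirDeriv (eS 2) a p * dirDeriv (eS 2) S p
              + a p * dirDeriv (eS 2) (dirDeriv (eS 2) S) p)
      = ε ^ 2 * ε⁻¹ * (υ ^ 2 * (2 * dirDeriv eT a p * dirDeriv eT S p
            + a p * dirDeriv eT (dirDeriv eT S) p)) := by
    have h := congrArg Complex.im key
    simpa only [Complex.add_im, Complex.mul_im, Complex.mul_re, Complex.ofReal_re,
      Complex.ofReal_im, Complex.I_re, Complex.I_im, mul_zero, zero_mul, mul_one,
      one_mul, add_zero, zero_add, sub_zero] using h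
  -- convert n-derivatives to a-derivatives
  have hnn : ∀ v q, dirDeriv v n q = 2 * a q * dirDeriv v a q := by
    intro v q
    have hfn : n = fun r => a r ^ 2 := funext fun r => (Real.sq_sqrt (hpos r).le).symm
    conv_lhs => rw [hfn]
    exact dirDeriv_sq (haD q)
  rw [Fin.sum_univ_three,
    dirDeriv_mul (hnD p) (hSD1 (eS 0) p),
    dirDeriv_mul (hnD p) (hSD1 (eS 1) p),
    dirDeriv_mul (hnD p) (hSD1 (eS 2) p),
    dirDeriv_mul (hnD p) (hSD1 eT p),
    hnn eT p, hnn (eS 0) p, hnn (eS 1) p, hnn (eS 2) p]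
  have hnp : n p = a p ^ 2 := (Real.sq_sqrt (hpos p).le).symm
  rw [hnp]
  linear_combination (norm := (field_simp; ring)) (a p * ε⁻¹) * him
end
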